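/- Let n ≥ 1, d = 2^n, and let U and V be d × d unitary matrices over ℂ. Define C_HST(U,V) := 1 − |Tr(V†U)|²/d². Then C_HST(U,V) = 0 if and only if there exists φ ∈ ℝ such that V = e^{iφ} U; equivalently, |Tr(V†U)| = d if and only if U and V differ by a global phase factor. -/

import Mathlib

open Matrix Complex

noncomputable section

/-- The Hilbert-Schmidt test cost for unitaries on `n` qubits (`d = 2^n`):
`C_HST(U,V) = 1 - |Tr(V†U)|²/d²`. -/
def CHST (n : ℕ) (U V : Matrix (Fin n → Fin 2) (Fin n → Fin 2) ℂ) : ℝ :=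
  1 - ‖(Vᴴ * U).trace‖ ^ 2 / ((2 : ℝ) ^ n) ^ 2

lemma aux_eq_one (w : ℂ) (h1 : ‖w‖ ≤ 1) (h2 : w.re = 1) : w = 1 := by
  have hsq : Complex.normSq w ≤ 1 := by
    have h3 : Complex.normSq w = ‖w‖ ^ 2 := by
      rw [Complex.normSq_eq_norm_sq]
    nlinarith [norm_nonneg w]
  have him : w.im = 0 := by
    have h4 := Complex.normSq_apply w
    nlinarith
  exact Complex.ext (by simp [h2]) (by simp [him])

lemma aux_key {ι : Type*} [Fintype ι] [DecidableEq ι] (W : Matrix ι ι ℂ)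
    (hW : W ∈ Matrix.unitaryGroup ι ℂ)
    (h : ‖W.trace‖ = (Fintype.card ι : ℝ)) (hd : 0 < Fintype.card ι) :
    ∃ c : ℂ, ‖c‖ = 1 ∧ W = c • 1 := by
  have htr : W.trace ≠ 0 := by
    intro h0
    rw [h0, norm_zero] at h
    have : (0:ℝ) < (Fintype.card ι : ℝ) := by exact_mod_cast hd
    linarith
  have hnt : (0:ℝ) < ‖W.trace‖ := norm_pos_iff.mpr htr
  set c : ℂ := W.trace / (‖W.trace‖ : ℝ) with hc
  have hcn : ‖c‖ = 1 := by
    rw [hc, norm_div, Complex.norm_real, Real.norm_eq_abs, abs_of_pos hnt,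
      div_self (ne_of_gt hnt)]
  have hcnorm : ∀ z : ℂ, ‖(starRingEnd ℂ) c * z‖ = ‖z‖ := by
    intro z
    rw [norm_mul, RCLike.norm_conj, hcn, one_mul]
  -- rows have unit norm
  have hrow : ∀ i : ι, ∑ j, Complex.normSq (W i j) = 1 := by
    intro i
    have h1 : (W * star W) i i = (1 : Matrix ι ι ℂ) i i := by
      rw [Matrix.mem_unitaryGroup_iff.mp hW]
    rw [Matrix.mul_apply, Matrix.one_apply_eq] at h1
    have h2 : ∑ j, W i j * star W j i = ∑ j, ((Complex.normSq (W i j) : ℝ) : ℂ) := by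
      apply Finset.sum_congr rfl
      intro j _
      rw [Matrix.star_apply]
      exact Complex.mul_conj (W i j)
    rw [h2] at h1
    have h3 : (((∑ j, Complex.normSq (W i j) : ℝ)) : ℂ) = 1 := by
      push_cast
      exact h1
    exact_mod_cast h3
  have hdiag_le : ∀ i : ι, ‖W i i‖ ≤ 1 := by
    intro i
    have h1 : Complex.normSq (W i i) ≤ 1 := by
      rw [← hrow i]
      exact Finset.single_le_sum (f := fun j => Complex.normSq (W i j))
        (fun j _ => Complex.normSq_nonneg _) (Finset.mem_univ i)
    have h2 : Complex.normSq (W i i) = ‖W i i‖ ^ 2 := by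
      rw [Complex.normSq_eq_norm_sq]
    nlinarith [norm_nonneg (W i i)]
  -- sum of real parts
  have hct : (starRingEnd ℂ) c * W.trace = ((Fintype.card ι : ℝ) : ℂ) := by
    have hne : ((‖W.trace‖:ℝ):ℂ) ≠ 0 := Complex.ofReal_ne_zero.mpr (ne_of_gt hnt)
    have key : (starRingEnd ℂ) c * W.trace = ((‖W.trace‖:ℝ):ℂ) := by
      rw [hc, map_div₀, Complex.conj_ofReal, div_mul_eq_mul_div, div_eq_iff hne]
      rw [mul_comm ((starRingEnd ℂ) W.trace) W.trace, Complex.mul_conj,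
        Complex.normSq_eq_norm_sq]
      norm_cast
      ring
    rw [key, h]
  have hsum : ∑ i, ((starRingEnd ℂ) c * W i i).re = (Fintype.card ι : ℝ) := by
    have h1 : ∑ i, (starRingEnd ℂ) c * W i i = (starRingEnd ℂ) c * W.trace := by
      rw [← Finset.mul_sum]; rfl
    rw [← Complex.re_sum, h1, hct, Complex.ofReal_re]
  have hle : ∀ i : ι, ((starRingEnd ℂ) c * W i i).re ≤ 1 := by
    intro i
    have h1 : ((starRingEnd ℂ) c * W i i).re ≤ ‖(starRingEnd ℂ) c * W i i‖ :=
      Complex.re_le_norm _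
    rw [hcnorm] at h1
    linarith [hdiag_le i]
  have hterm : ∀ i : ι, ((starRingEnd ℂ) c * W i i).re = 1 := by
    have h0 : ∑ i, (1 - ((starRingEnd ℂ) c * W i i).re) = 0 := by
      rw [Finset.sum_sub_distrib, hsum]
      simp
    have h1 := (Finset.sum_eq_zero_iff_of_nonneg
      (fun i _ => by linarith [hle i])).mp h0
    intro i
    have := h1 i (Finset.mem_univ i)
    linarith
  have hdiag : ∀ i : ι, W i i = c := by
    intro i
    have h1 : (starRingEnd ℂ) c * W i i = 1 := by
      apply aux_eq_one
      · rw [hcnorm]; exact hdiag_le i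
      · exact hterm i
    have h3 : c * (starRingEnd ℂ) c = 1 := by
      rw [Complex.mul_conj, Complex.normSq_eq_norm_sq, hcn]
      norm_num
    have h4 : c * ((starRingEnd ℂ) c * W i i) = c * 1 := by rw [h1]
    rw [← mul_assoc, h3, one_mul, mul_one] at h4
    exact h4
  have hoff : ∀ i j : ι, i ≠ j → W i j = 0 := by
    intro i j hij
    have h1 : Complex.normSq (W i i) = 1 := by
      rw [hdiag i, Complex.normSq_eq_norm_sq, hcn]
      norm_num
    have h2 : Complex.normSq (W i i) + ∑ k ∈ Finset.univ.erase i, Complex.normSq (W i k)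
        = ∑ k, Complex.normSq (W i k) :=
      Finset.add_sum_erase Finset.univ (fun k => Complex.normSq (W i k)) (Finset.mem_univ i)
    rw [hrow i, h1] at h2
    have h3 : ∑ k ∈ Finset.univ.erase i, Complex.normSq (W i k) = 0 := by linarith
    have h4 := (Finset.sum_eq_zero_iff_of_nonneg
      (fun k _ => Complex.normSq_nonneg (W i k))).mp h3
    have h5 := h4 j (Finset.mem_erase.mpr ⟨Ne.symm hij, Finset.mem_univ j⟩)
    exact Complex.normSq_eq_zero.mp h5
  refine ⟨c, hcn, ?_⟩
  ext i j
  by_cases hij : i = j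
  · subst hij
    simp [Matrix.smul_apply, Matrix.one_apply_eq, hdiag i]
  · simp [Matrix.smul_apply, Matrix.one_apply_ne hij, hoff i j hij]

/-- For unitaries `U`, `V` on `n ≥ 1` qubits (`d = 2^n`), the cost
`C_HST(U,V)` vanishes iff `V = e^{iφ} U` for some real `φ`; equivalently,
`|Tr(V†U)| = d` iff `U` and `V` differ by a global phase. -/
theorem stmt0 (n : ℕ) (hn : 1 ≤ n)
    (U V : Matrix (Fin n → Fin 2) (Fin n → Fin 2) ℂ)
    (hU : U ∈ Matrix.unitaryGroup (Fin n → Fin 2) ℂ)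
    (hV : V ∈ Matrix.unitaryGroup (Fin n → Fin 2) ℂ) :
    (CHST n U V = 0 ↔ ∃ φ : ℝ, V = Complex.exp (Complex.I * φ) • U) ∧
    (‖(Vᴴ * U).trace‖ = (2 : ℝ) ^ n ↔ ∃ φ : ℝ, V = Complex.exp (Complex.I * φ) • U) := by
  have hcard : Fintype.card (Fin n → Fin 2) = 2 ^ n := by simp
  have hdpos : (0:ℝ) < (2:ℝ) ^ n := by positivity
  have hiff2 : ‖(Vᴴ * U).trace‖ = (2 : ℝ) ^ n ↔
      ∃ φ : ℝ, V = Complex.exp (Complex.I * φ) • U := by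
    constructor
    · intro h
      have hWmem : Vᴴ * U ∈ Matrix.unitaryGroup (Fin n → Fin 2) ℂ :=
        mul_mem (Unitary.star_mem hV) hU
      have hd : 0 < Fintype.card (Fin n → Fin 2) := by rw [hcard]; positivity
      obtain ⟨c, hcn, hWc⟩ := aux_key (Vᴴ * U) hWmem (by rw [h, hcard]; push_cast; ring) hd
      have hVV : V * Vᴴ = 1 := by
        have := Matrix.mem_unitaryGroup_iff.mp hV
        rwa [Matrix.star_eq_conjTranspose] at this
      have hU_eq : U = c • V := by
        have h1 : V * (Vᴴ * U) = V * (c • 1) := by rw [hWc]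
        have h2 : V * (Vᴴ * U) = U := by rw [← mul_assoc, hVV, one_mul]
        rw [h2] at h1
        rw [h1, Matrix.mul_smul, mul_one]
      have hV_eq : V = (starRingEnd ℂ) c • U := by
        rw [hU_eq, smul_smul, mul_comm, Complex.mul_conj, Complex.normSq_eq_norm_sq,
          hcn]
        norm_num
      refine ⟨Complex.arg ((starRingEnd ℂ) c), ?_⟩
      have hcc : ‖(starRingEnd ℂ) c‖ = 1 := by rw [RCLike.norm_conj]; exact hcn
      have h3 : Complex.exp (Complex.I * (Complex.arg ((starRingEnd ℂ) c) : ℝ))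
          = (starRingEnd ℂ) c := by
        have h4 := Complex.norm_mul_exp_arg_mul_I ((starRingEnd ℂ) c)
        rw [hcc] at h4
        rw [mul_comm]
        simpa using h4
      rw [h3]
      exact hV_eq
    · rintro ⟨φ, rfl⟩
      have he : ‖Complex.exp (Complex.I * (φ:ℝ))‖ = 1 := by
        rw [mul_comm]
        exact Complex.norm_exp_ofReal_mul_I φ
      have hUU : Uᴴ * U = 1 := by
        have := Matrix.mem_unitaryGroup_iff'.mp hU
        rwa [Matrix.star_eq_conjTranspose] at this
      rw [Matrix.conjTranspose_smul, Matrix.smul_mul, hUU, Matrix.trace_smul]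
      rw [Matrix.trace_one, smul_eq_mul, norm_mul, norm_star, he, one_mul]
      rw [Complex.norm_natCast, hcard]
      push_cast
      ring
  refine ⟨?_, hiff2⟩
  rw [← hiff2]
  unfold CHST
  constructor
  · intro h
    have h1 : ‖(Vᴴ * U).trace‖ ^ 2 = ((2:ℝ) ^ n) ^ 2 := by
      have hne : ((2:ℝ) ^ n) ^ 2 ≠ 0 := by positivity
      field_simp at h
      linarith
    nlinarith [norm_nonneg (Vᴴ * U).trace]
  · intro h
    rw [h]
    field_simp
    norm_num

end
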